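/- Let d ≥ 2 be even, q an odd prime power, j ∈ F_q^*, and χ a nontrivial additive character of F_q. Let H_j = {x ∈ F_q^{d+1} : x_1² + ... + x_d² = j x_{d+1}²} and define (dσ_j)^∨(m) = |H_j|^{-1} Σ_{x ∈ H_j} χ(m·x). Then for every nonzero m ∈ F_q^{d+1}, |(dσ_j)^∨(m)| ≤ q^{-d/2}. -/

import Mathlib

set_option linter.unusedSectionVars false
open Finset
noncomputable def qc (F : Type) [Field F] [Fintype F] [DecidableEq F] : MulChar F ℂ :=
  (quadraticChar F).ringHomComp (Int.castRingHom ℂ)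

variable {F : Type} [Field F] [Fintype F] [DecidableEq F]

lemma qc_quad : (qc F).IsQuadratic := (quadraticChar_isQuadratic F).comp _

lemma qc_ne_one (hchar : ringChar F ≠ 2) : qc F ≠ 1 :=
  (MulChar.ringHomComp_ne_one_iff (RingHom.injective_int _)).mpr (quadraticChar_ne_one hchar)

lemma qc_abs_le (a : F) : ‖qc F a‖ ≤ 1 := by
  rcases qc_quad (F := F) a with h | h | h <;> simp [h]

lemma qc_inv (a : F) : qc F a⁻¹ = qc F a := by
  rw [← MulChar.inv_apply', qc_quad.inv]

lemma qc_sum_zero (hchar : ringChar F ≠ 2) : ∑ a : F, qc F a = 0 := by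
  have h : ((∑ a : F, quadraticChar F a : ℤ) : ℂ) = 0 := by
    rw [quadraticChar_sum_zero hchar]; simp
  rw [Int.cast_sum] at h
  simpa [qc, MulChar.ringHomComp] using h

lemma lin_sum {χ : AddChar F ℂ} (hχ : χ ≠ 1) (b : F) :
    ∑ x : F, χ (b * x) = if b = 0 then (Fintype.card F : ℂ) else 0 := by
  simp_rw [mul_comm b]
  rw [AddChar.sum_mulShift b (AddChar.IsPrimitive.of_ne_one hχ)]
  split <;> simp

lemma addchar_map_sum {ι : Type*} (χ : AddChar F ℂ) (s : Finset ι) (f : ι → F) :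
    χ (∑ i ∈ s, f i) = ∏ i ∈ s, χ (f i) := by
  classical
  induction s using Finset.induction with
  | empty => simp
  | insert _ _ h ih => rw [Finset.sum_insert h, Finset.prod_insert h, AddChar.map_add_eq_mul, ih]
lemma sum_sq (hchar : ringChar F ≠ 2) {χ : AddChar F ℂ} (hχ : χ ≠ 1) {t : F} (ht : t ≠ 0) :
    ∑ x : F, χ (t * x ^ 2) = qc F t * gaussSum (qc F) χ := by
  have h1 : ∀ a : F, (∑ x : F, if x ^ 2 = a then (1 : ℂ) else 0) = qc F a + 1 := by
    intro a
    rw [Finset.sum_boole]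
    have h := quadraticChar_card_sqrts hchar a
    rw [Set.toFinset_setOf] at h
    have h' : ((#(Finset.univ.filter fun x : F => x ^ 2 = a) : ℤ) : ℂ)
        = ((quadraticChar F a : ℤ) : ℂ) + 1 := by rw [h]; push_cast; ring
    rw [show ((#(Finset.univ.filter fun x : F => x ^ 2 = a) : ℤ) : ℂ)
        = ((#(Finset.univ.filter fun x : F => x ^ 2 = a) : ℕ) : ℂ) by push_cast; ring] at h'
    rw [h']
    simp [qc, MulChar.ringHomComp]
  calc ∑ x : F, χ (t * x ^ 2)
      = ∑ x : F, ∑ a : F, if x ^ 2 = a then χ (t * a) else 0 := by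
        refine Finset.sum_congr rfl fun x _ => ?_
        rw [Finset.sum_ite_eq univ (x ^ 2) (fun a => χ (t * a))]
        simp
    _ = ∑ a : F, (qc F a + 1) * χ (t * a) := by
        rw [Finset.sum_comm]
        refine Finset.sum_congr rfl fun a _ => ?_
        rw [← h1 a, Finset.sum_mul]
        exact Finset.sum_congr rfl fun x _ => by split <;> simp
    _ = (∑ a : F, qc F a * χ (t * a)) + ∑ a : F, χ (t * a) := by
        rw [← Finset.sum_add_distrib]
        exact Finset.sum_congr rfl fun a _ => by ring
    _ = ∑ a : F, qc F a * χ (t * a) := by rw [lin_sum hχ t]; simp [ht]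
    _ = qc F t * gaussSum (qc F) χ := by
        have hb := (mulLeft_bijective₀ t⁻¹ (inv_ne_zero ht)).sum_comp
          (fun a => qc F a * χ (t * a))
        rw [gaussSum, Finset.mul_sum, ← hb]
        refine Finset.sum_congr rfl fun b _ => ?_
        rw [map_mul (qc F), qc_inv, ← mul_assoc t, mul_inv_cancel₀ ht, one_mul, mul_assoc]

lemma complete_sq (hchar : ringChar F ≠ 2) {χ : AddChar F ℂ} (hχ : χ ≠ 1) {t : F} (ht : t ≠ 0)
    (b : F) :
    ∑ x : F, χ (t * x ^ 2 + b * x) = χ (-(b ^ 2) / (4 * t)) * (qc F t * gaussSum (qc F) χ) := by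
  have h2 : (2 : F) ≠ 0 := Ring.two_ne_zero hchar
  have h4 : (4 : F) ≠ 0 := by
    intro h
    exact h2 (by have : (2 : F) * 2 = 0 := by rw [← h]; norm_num
                 rcases mul_eq_zero.mp this with h | h <;> exact h)
  have step : ∀ y : F, t * (y - b / (2 * t)) ^ 2 + b * (y - b / (2 * t))
      = -(b ^ 2) / (4 * t) + t * y ^ 2 := by
    intro y
    field_simp
    ring
  calc ∑ x : F, χ (t * x ^ 2 + b * x)
      = ∑ y : F, χ (t * (y - b / (2 * t)) ^ 2 + b * (y - b / (2 * t))) :=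
        (Fintype.sum_bijective (fun y => y - b / (2 * t))
          (Equiv.subRight (b / (2 * t))).bijective _ _ fun y => rfl).symm
    _ = ∑ y : F, χ (-(b ^ 2) / (4 * t)) * χ (t * y ^ 2) := by
        refine Finset.sum_congr rfl fun y _ => ?_
        rw [step y, AddChar.map_add_eq_mul]
    _ = χ (-(b ^ 2) / (4 * t)) * (qc F t * gaussSum (qc F) χ) := by
        rw [← Finset.mul_sum, sum_sq hchar hχ ht]

lemma abs_gauss (hchar : ringChar F ≠ 2) {χ : AddChar F ℂ} (hχ : χ ≠ 1) :
    ‖gaussSum (qc F) χ‖ = Real.sqrt (Fintype.card F) := by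
  have hsq := gaussSum_sq (qc_ne_one hchar) qc_quad (AddChar.IsPrimitive.of_ne_one hχ)
  have hu : ‖qc F (-1)‖ = 1 := by
    rcases quadraticChar_dichotomy (F := F) (a := -1) (neg_ne_zero.mpr one_ne_zero) with h | h <;>
      simp [qc, MulChar.ringHomComp_apply, h]
  have habs : ‖gaussSum (qc F) χ‖ ^ 2 = (Fintype.card F : ℝ) := by
    rw [← norm_pow, hsq, norm_mul, hu, one_mul, Complex.norm_natCast]
  rw [← habs, Real.sqrt_sq (norm_nonneg _)]
lemma prod_split {d : ℕ} (g : Fin d → F → ℂ) (h : F → ℂ) :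
    ∑ x : (Fin d → F) × F, (∏ i, g i (x.1 i)) * h x.2
      = (∏ i, ∑ a : F, g i a) * ∑ b : F, h b := by
  rw [Fintype.sum_prod_type, Fintype.prod_sum, Finset.sum_mul_sum]
lemma key (hchar : ringChar F ≠ 2) {d : ℕ} (hd0 : d ≠ 0) (hdeven : Even d) {j : F} (hj : j ≠ 0)
    {χ : AddChar F ℂ} (hχ : χ ≠ 1) (m : (Fin d → F) × F) :
    (Fintype.card F : ℂ) *
      ∑ x ∈ univ.filter (fun x : (Fin d → F) × F =>
          ∑ i, (x.1 i) ^ 2 = j * x.2 ^ 2),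
        χ (∑ i, m.1 i * x.1 i + m.2 * x.2)
    = (if m = 0 then (Fintype.card F : ℂ) ^ (d + 1) else 0)
      + (gaussSum (qc F) χ) ^ (d + 1) *
          ∑ t ∈ univ.erase (0 : F),
            qc F (-(j * t)) * χ (((m.2 ^ 2 / j - ∑ i, m.1 i ^ 2) / 4) / t) := by
  have h2 : (2 : F) ≠ 0 := Ring.two_ne_zero hchar
  have h4 : (4 : F) ≠ 0 := by
    intro h
    refine h2 ?_
    have : (2 : F) * 2 = 0 := by rw [show (2:F)*2 = 4 by norm_num, h]
    rcases mul_eq_zero.mp this with h' | h' <;> exact h'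
  set q := Fintype.card F with hq
  set G := gaussSum (qc F) χ with hG
  set w := (m.2 ^ 2 / j - ∑ i, m.1 i ^ 2) / 4 with hw
  set L : (Fin d → F) × F → F := fun x => ∑ i, m.1 i * x.1 i + m.2 * x.2 with hL
  set Q : (Fin d → F) × F → F := fun x => ∑ i, (x.1 i) ^ 2 - j * x.2 ^ 2 with hQ
  have step1 : (q : ℂ) *
      ∑ x ∈ univ.filter (fun x : (Fin d → F) × F =>
          ∑ i, (x.1 i) ^ 2 = j * x.2 ^ 2), χ (L x)
      = ∑ t : F, ∑ x : (Fin d → F) × F, χ (t * Q x + L x) := by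
    rw [Finset.mul_sum, Finset.sum_filter]
    rw [Finset.sum_comm]
    rw [show (∑ x : (Fin d → F) × F, if (∑ i, (x.1 i) ^ 2 = j * x.2 ^ 2)
          then (q:ℂ) * χ (L x) else 0)
        = ∑ x : (Fin d → F) × F, ∑ t : F, χ (t * Q x + L x) from ?_]
    refine Finset.sum_congr rfl fun x _ => ?_
    have : ∑ t : F, χ (t * Q x + L x) = (∑ t : F, χ (Q x * t)) * χ (L x) := by
      rw [Finset.sum_mul]
      exact Finset.sum_congr rfl fun t _ => by rw [← AddChar.map_add_eq_mul, mul_comm (Q x) t]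
    rw [this, lin_sum hχ (Q x)]
    by_cases h : (∑ i, (x.1 i) ^ 2 = j * x.2 ^ 2)
    · have : Q x = 0 := by rw [hQ]; simpa [sub_eq_zero] using h
      simp [h, this, hq]
    · have : Q x ≠ 0 := by rw [hQ]; simpa [sub_eq_zero] using h
      simp [h, this]
  rw [step1]
  rw [← Finset.sum_erase_add univ _ (Finset.mem_univ (0 : F))]
  have hA0 : ∑ x : (Fin d → F) × F, χ ((0 : F) * Q x + L x)
      = (if m = 0 then (q : ℂ) ^ (d + 1) else 0) := by
    have e1 : ∀ x : (Fin d → F) × F, χ ((0 : F) * Q x + L x)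
        = (∏ i, χ (m.1 i * x.1 i)) * χ (m.2 * x.2) := by
      intro x
      rw [zero_mul, zero_add, hL]
      simp only
      rw [AddChar.map_add_eq_mul, addchar_map_sum]
    rw [Finset.sum_congr rfl fun x _ => e1 x,
      prod_split (fun i a => χ (m.1 i * a)) (fun b => χ (m.2 * b)), Finset.prod_congr rfl
      (fun i _ => lin_sum hχ (m.1 i)), lin_sum hχ m.2]
    by_cases hm : m = 0
    · subst hm
      simp [Finset.prod_const, pow_succ, hq]
    · rcases Prod.mk.injEq .. ▸ (fun h => hm (Prod.ext h.1 h.2) : ¬(m.1 = 0 ∧ m.2 = 0)) with h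
      by_cases hm2 : m.2 = 0
      · have hm1 : m.1 ≠ 0 := fun h1 => hm (Prod.ext h1 hm2)
        obtain ⟨i, hi⟩ : ∃ i, m.1 i ≠ 0 := by
          by_contra hc
          push_neg at hc
          exact hm1 (funext hc)
        rw [Finset.prod_eq_zero (Finset.mem_univ i) (by simp [hi])]
        simp [hm]
      · simp [hm2, hm]
  rw [hA0]
  have hAt : ∀ t ∈ univ.erase (0 : F), ∑ x : (Fin d → F) × F, χ (t * Q x + L x)
      = G ^ (d + 1) * (qc F (-(j * t)) * χ (w / t)) := by
    intro t htmem
    have ht : t ≠ 0 := Finset.ne_of_mem_erase htmem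
    have hjt : -(j * t) ≠ 0 := neg_ne_zero.mpr (mul_ne_zero hj ht)
    have e1 : ∀ x : (Fin d → F) × F, t * Q x + L x
        = ∑ i, (t * x.1 i ^ 2 + m.1 i * x.1 i) + (-(j * t) * x.2 ^ 2 + m.2 * x.2) := by
      intro x
      rw [hQ, hL]
      simp only
      rw [Finset.sum_add_distrib, ← Finset.mul_sum]
      ring
    have e2 : ∀ x : (Fin d → F) × F, χ (t * Q x + L x)
        = (∏ i, χ (t * x.1 i ^ 2 + m.1 i * x.1 i)) * χ (-(j * t) * x.2 ^ 2 + m.2 * x.2) := by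
      intro x
      rw [e1 x, AddChar.map_add_eq_mul, addchar_map_sum]
    rw [Finset.sum_congr rfl fun x _ => e2 x,
      prod_split (fun i a => χ (t * a ^ 2 + m.1 i * a)) (fun b => χ (-(j * t) * b ^ 2 + m.2 * b)),
      Finset.prod_congr rfl (fun i _ => complete_sq hchar hχ ht (m.1 i)),
      complete_sq hchar hχ hjt m.2]
    have hqt : qc F t ^ d = 1 := by
      have h1 : (qc F ^ d) t = (1 : MulChar F ℂ) t := by rw [qc_quad.pow_even hdeven]
      rwa [MulChar.pow_apply' _ hd0, MulChar.one_apply (isUnit_iff_ne_zero.mpr ht)] at h1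
    have hsum : (∑ i, -(m.1 i ^ 2) / (4 * t)) = (-(∑ i, m.1 i ^ 2)) / (4 * t) := by
      rw [← Finset.sum_div]
      congr 1
      simp
    have harg : (∑ i, -(m.1 i ^ 2) / (4 * t)) + -(m.2 ^ 2) / (4 * -(j * t)) = w / t := by
      rw [hsum, hw]
      field_simp
      ring
    rw [Finset.prod_mul_distrib, Finset.prod_mul_distrib, Finset.prod_const, Finset.prod_const,
      Finset.card_univ, Fintype.card_fin, hqt, ← addchar_map_sum]
    have hfin : χ (∑ i, -(m.1 i ^ 2) / (4 * t)) * χ (-(m.2 ^ 2) / (4 * -(j * t))) = χ (w / t) := by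
      rw [← AddChar.map_add_eq_mul, harg]
    linear_combination (G ^ (d + 1) * qc F (-(j * t))) * hfin
  rw [Finset.sum_congr rfl hAt, ← Finset.mul_sum]
  ring
lemma sum_qc_shift (hchar : ringChar F ≠ 2) {j : F} (hj : j ≠ 0) :
    ∑ t : F, qc F (-(j * t)) = 0 := by
  have hb := (mulLeft_bijective₀ (-j) (neg_ne_zero.mpr hj)).sum_comp (fun s => qc F s)
  calc ∑ t : F, qc F (-(j * t)) = ∑ t : F, qc F (-j * t) := by
        refine Finset.sum_congr rfl fun t _ => ?_
        rw [neg_mul]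
    _ = ∑ s : F, qc F s := hb
    _ = 0 := qc_sum_zero hchar

lemma card_H (hchar : ringChar F ≠ 2) {d : ℕ} (hd0 : d ≠ 0) (hdeven : Even d) {j : F}
    (hj : j ≠ 0) {χ : AddChar F ℂ} (hχ : χ ≠ 1) :
    (((univ.filter (fun x : (Fin d → F) × F =>
        ∑ i, (x.1 i) ^ 2 = j * x.2 ^ 2)).card : ℂ))
      = (Fintype.card F : ℂ) ^ d := by
  have h := key hchar hd0 hdeven hj hχ (0 : (Fin d → F) × F)
  have h0 : qc F (-(j * (0 : F))) = 0 := by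
    rw [mul_zero, neg_zero, MulChar.map_zero]
  simp only [Prod.fst_zero, Prod.snd_zero, Pi.zero_apply, zero_mul, Finset.sum_const_zero,
    add_zero, AddChar.map_zero_eq_one, Finset.sum_const, nsmul_eq_mul, mul_one, if_pos rfl,
    ne_eq, OfNat.ofNat_ne_zero, not_false_eq_true, zero_pow, zero_div, sub_zero, hd0,
    if_true] at h
  rw [Finset.sum_erase (f := fun t => qc F (-(j * t))) univ h0,
    sum_qc_shift hchar hj, mul_zero, add_zero] at h
  have hq0 : ((Fintype.card F : ℂ)) ≠ 0 := by
    exact_mod_cast Nat.cast_ne_zero.mpr Fintype.card_ne_zero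
  have := mul_left_cancel₀ hq0 (h.trans (by rw [pow_succ'] ))
  exact this
theorem fourier_decay_H
    (F : Type) [Field F] [Fintype F] [DecidableEq F]
    (hchar : ringChar F ≠ 2)
    (d : ℕ) (hd2 : 2 ≤ d) (hdeven : Even d) (j : F) (hj : j ≠ 0)
    (χ : AddChar F ℂ) (hχ : χ ≠ 1)
    (m : (Fin d → F) × F) (hm : m ≠ 0) :
    norm
      ((((univ.filter (fun x : (Fin d → F) × F =>
            ∑ i, (x.1 i) ^ 2 = j * x.2 ^ 2)).card : ℂ))⁻¹ *
        ∑ x ∈ univ.filter (fun x : (Fin d → F) × F =>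
            ∑ i, (x.1 i) ^ 2 = j * x.2 ^ 2),
          χ (∑ i, m.1 i * x.1 i + m.2 * x.2)) ≤
      (Fintype.card F : ℝ) ^ (-(d : ℝ) / 2) := by
  have hd0 : d ≠ 0 := by omega
  have hcard := card_H hchar hd0 hdeven hj hχ
  have hkey := key hchar hd0 hdeven hj hχ m
  rw [if_neg hm, zero_add] at hkey
  set q := Fintype.card F with hqdef
  have hqpos : 0 < (q : ℝ) := by exact_mod_cast Fintype.card_pos
  set r := Real.sqrt q with hr
  have hrpos : 0 < r := Real.sqrt_pos.mpr hqpos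
  have hr2 : r ^ 2 = (q : ℝ) := Real.sq_sqrt hqpos.le
  set G := gaussSum (qc F) χ with hG
  set w := (m.2 ^ 2 / j - ∑ i, m.1 i ^ 2) / 4 with hw
  set S := ∑ x ∈ univ.filter (fun x : (Fin d → F) × F =>
      ∑ i, (x.1 i) ^ 2 = j * x.2 ^ 2), χ (∑ i, m.1 i * x.1 i + m.2 * x.2) with hS
  set K := ∑ t ∈ univ.erase (0 : F), qc F (-(j * t)) * χ (w / t) with hK
  -- bound on |K|
  have habsK : ‖K‖ ≤ r := by
    have h0 : qc F (-(j * (0:F))) * χ (w / 0) = 0 := by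
      rw [mul_zero, neg_zero, MulChar.map_zero, zero_mul]
    rw [hK, Finset.sum_erase (f := fun t => qc F (-(j * t)) * χ (w / t)) univ h0]
    by_cases hw0 : w = 0
    · have : ∑ t : F, qc F (-(j * t)) * χ (w / t) = 0 := by
        have he : ∑ t : F, qc F (-(j * t)) * χ (w / t) = ∑ t : F, qc F (-(j * t)) :=
          Finset.sum_congr rfl fun t _ => by
            rw [hw0, zero_div, AddChar.map_zero_eq_one, mul_one]
        rw [he]
        exact sum_qc_shift hchar hj
      rw [this, norm_zero]
      exact hrpos.le
    · have hinv : Function.Involutive (fun t : F => w * t⁻¹) := by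
        intro t
        by_cases ht : t = 0
        · simp [ht]
        · field_simp
      have heq : ∑ t : F, qc F (-(j * t)) * χ (w / t)
          = ∑ s : F, qc F (-(j * w)) * (qc F s * χ s) := by
        rw [← hinv.bijective.sum_comp (fun t => qc F (-(j * t)) * χ (w / t))]
        refine Finset.sum_congr rfl fun s _ => ?_
        show qc F (-(j * (w * s⁻¹))) * χ (w / (w * s⁻¹)) = qc F (-(j * w)) * (qc F s * χ s)
        by_cases hs : s = 0
        · subst hs
          simp [MulChar.map_zero]
        · have h1 : w / (w * s⁻¹) = s := by field_simp
          have h2 : -(j * (w * s⁻¹)) = -(j * w) * s⁻¹ := by ring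
          rw [h1, h2, map_mul (qc F), qc_inv]
          ring
      rw [heq, ← Finset.mul_sum, show (∑ s : F, qc F s * χ s) = G from rfl, norm_mul,
        abs_gauss hchar hχ, ← hr]
      exact mul_le_of_le_one_left hrpos.le (qc_abs_le _)
  have habsG : ‖G‖ = r := abs_gauss hchar hχ
  have hqS : (q : ℝ) * ‖S‖ = ‖G‖ ^ (d + 1) * ‖K‖ := by
    calc (q : ℝ) * ‖S‖ = ‖(q : ℂ) * S‖ := by
          rw [norm_mul, Complex.norm_natCast]
      _ = ‖G ^ (d + 1) * K‖ := by rw [hkey]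
      _ = ‖G‖ ^ (d + 1) * ‖K‖ := by rw [norm_mul, norm_pow]
  have hSle : ‖S‖ ≤ r ^ (d + 2) / q := by
    rw [le_div_iff₀ hqpos, mul_comm]
    calc (q : ℝ) * ‖S‖ = ‖G‖ ^ (d + 1) * ‖K‖ := hqS
      _ ≤ r ^ (d + 1) * r := by
          rw [habsG]
          exact mul_le_mul_of_nonneg_left habsK (pow_nonneg hrpos.le _)
      _ = r ^ (d + 2) := by ring
  -- final computation
  rw [norm_mul, norm_inv, hcard, norm_pow, Complex.norm_natCast]
  have hrhs : (q : ℝ) ^ (-(d : ℝ) / 2) = (r ^ d)⁻¹ := by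
    have h1 : (q : ℝ) ^ (-(d : ℝ) / 2) = ((q : ℝ) ^ ((d : ℝ) / 2))⁻¹ := by
      rw [show -(d : ℝ) / 2 = -((d : ℝ) / 2) by ring, Real.rpow_neg hqpos.le]
    have h2 : (q : ℝ) ^ ((d : ℝ) / 2) = r ^ d := by
      rw [show (d : ℝ) / 2 = (1 / 2 : ℝ) * (d : ℝ) by ring, Real.rpow_mul hqpos.le,
        ← Real.sqrt_eq_rpow, Real.rpow_natCast]
    rw [h1, h2]
  rw [hrhs]
  calc ((q : ℝ) ^ d)⁻¹ * ‖S‖ ≤ ((q : ℝ) ^ d)⁻¹ * (r ^ (d + 2) / q) := by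
        exact mul_le_mul_of_nonneg_left hSle (inv_nonneg.mpr (pow_nonneg hqpos.le _))
    _ = (r ^ d)⁻¹ := by
        rw [← hr2]
        rw [← pow_mul]
        field_simp
        ring
  done
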